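/- Fedosov's principle: let f be a bounded operator on a Hilbert space H with ‖f‖ ≤ 1, and suppose there is n ≥ 1 such that (1 − f*f)ⁿ and (1 − f f*)ⁿ are trace class. Then f is a Fredholm operator. -/

import Mathlib

open ContinuousLinearMap

/-- `f` is Fredholm iff it is invertible modulo the compact operators. -/
def IsFredholm {H : Type*} [NormedAddCommGroup H] [InnerProductSpace ℂ H] [CompleteSpace H]
    (f : H →L[ℂ] H) : Prop :=
  ∃ g : H →L[ℂ] H, IsCompactOperator (g * f - 1 : H →L[ℂ] H) ∧ IsCompactOperator (f * g - 1 : H →L[ℂ] H)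

section Aux

set_option linter.unusedSectionVars false
set_option linter.unusedVariables false

variable {H : Type*} [NormedAddCommGroup H] [InnerProductSpace ℂ H] [CompleteSpace H]
variable {ι : Type*}

/-- Any continuous linear functional is a compact operator. -/
lemma aux_clm_scalar_compact (φ : H →L[ℂ] ℂ) : IsCompactOperator (φ : H → ℂ) := by
  refine ⟨Metric.closedBall 0 ‖φ‖, isCompact_closedBall _ _, ?_⟩
  refine Filter.mem_of_superset (Metric.closedBall_mem_nhds (0 : H) one_pos) ?_
  intro x hx
  simp only [Metric.mem_closedBall, dist_zero_right] at hx
  simp only [Set.mem_preimage, Metric.mem_closedBall, dist_zero_right]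
  calc ‖φ x‖ ≤ ‖φ‖ * ‖x‖ := φ.le_opNorm x
    _ ≤ ‖φ‖ * 1 := by
        exact mul_le_mul_of_nonneg_left hx (norm_nonneg _)
    _ = ‖φ‖ := mul_one _

lemma aux_rank_one_compact (v w : H) :
    IsCompactOperator (((ContinuousLinearMap.toSpanSingleton ℂ w).comp (innerSL ℂ v)) : H → H) :=
  (aux_clm_scalar_compact (innerSL ℂ v)).clm_comp (ContinuousLinearMap.toSpanSingleton ℂ w)

set_option linter.unusedSectionVars false

local notation "⟪" x ", " y "⟫" => @inner ℂ _ _ x y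

lemma aux_sum_inner_sq (b : HilbertBasis ι ℂ H) (x : H) (F : Finset ι) :
    ∑ i ∈ F, ‖(⟪b i, x⟫ : ℂ)‖ ^ 2 ≤ ‖x‖ ^ 2 := by
  have h := (b.hasSum_inner_mul_inner x x).mapL Complex.reCLM
  have h' : HasSum (fun i => ‖(⟪b i, x⟫ : ℂ)‖ ^ 2) (‖x‖ ^ 2) := by
    convert h using 2 with i
    · rw [← inner_conj_symm x (b i), Complex.conj_mul']
      simp [← Complex.ofReal_pow]
    · simp [← inner_self_eq_norm_sq (𝕜 := ℂ) x]
  exact sum_le_hasSum F (fun i _ => by positivity) h'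

lemma aux_norm_le_of_hs (b : HilbertBasis ι ℂ H) (S : H →L[ℂ] H) {C : ℝ} (hC : 0 ≤ C)
    (h : ∀ F : Finset ι, ∑ i ∈ F, ‖S (b i)‖ ^ 2 ≤ C ^ 2) : ‖S‖ ≤ C := by
  refine S.opNorm_le_bound hC fun x => ?_
  set g : ι → ℝ := fun i => ‖(⟪b i, x⟫ : ℂ)‖ * ‖S (b i)‖ with hg
  have hgnn : 0 ≤ g := fun i => mul_nonneg (norm_nonneg _) (norm_nonneg _)
  have hbd : ∀ F : Finset ι, ∑ i ∈ F, g i ≤ C * ‖x‖ := by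
    intro F
    have h1 : (∑ i ∈ F, g i) ^ 2 ≤
        (∑ i ∈ F, ‖(⟪b i, x⟫ : ℂ)‖ ^ 2) * ∑ i ∈ F, ‖S (b i)‖ ^ 2 := by
      simpa [sq] using Finset.sum_mul_sq_le_sq_mul_sq F (fun i => ‖(⟪b i, x⟫ : ℂ)‖)
        (fun i => ‖S (b i)‖)
    have h2 : (∑ i ∈ F, g i) ^ 2 ≤ (C * ‖x‖) ^ 2 := by
      calc (∑ i ∈ F, g i) ^ 2 ≤ _ := h1
        _ ≤ ‖x‖ ^ 2 * C ^ 2 := by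
            apply mul_le_mul (aux_sum_inner_sq b x F) (h F)
              (Finset.sum_nonneg fun i _ => by positivity) (by positivity)
        _ = (C * ‖x‖) ^ 2 := by ring
    have h3 := Real.sqrt_le_sqrt h2
    rwa [Real.sqrt_sq (Finset.sum_nonneg fun i _ => hgnn i),
      Real.sqrt_sq (by positivity)] at h3
  have hsg : Summable g := summable_of_sum_le hgnn hbd
  have hx : HasSum (fun i => (⟪b i, x⟫ : ℂ) • S (b i)) (S x) := by
    have := (b.hasSum_repr x).mapL S
    simpa [b.repr_apply_apply] using this
  calc ‖S x‖ = ‖∑' i, (⟪b i, x⟫ : ℂ) • S (b i)‖ := by rw [hx.tsum_eq]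
    _ ≤ ∑' i, ‖(⟪b i, x⟫ : ℂ) • S (b i)‖ := norm_tsum_le_tsum_norm (by
        simpa [norm_smul] using hsg)
    _ = ∑' i, g i := by simp [hg, norm_smul]
    _ ≤ C * ‖x‖ := Summable.tsum_le_of_sum_le hsg hbd

lemma aux_hs_compact (b : HilbertBasis ι ℂ H) (S : H →L[ℂ] H)
    (h : Summable fun i => ‖S (b i)‖ ^ 2) : IsCompactOperator (S : H → H) := by
  classical
  set T : Finset ι → H →L[ℂ] H :=
    fun F => ∑ i ∈ F, (ContinuousLinearMap.toSpanSingleton ℂ (S (b i))).comp (innerSL ℂ (b i))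
    with hT
  have hTc : ∀ F, IsCompactOperator (T F : H → H) := by
    intro F
    induction F using Finset.cons_induction with
    | empty => simpa [hT] using (isCompactOperator_zero (M₁ := H) (M₂ := H))
    | cons j F hj ih =>
        have : (T (Finset.cons j F hj) : H → H) =
            (((ContinuousLinearMap.toSpanSingleton ℂ (S (b j))).comp (innerSL ℂ (b j))) : H → H)
            + (T F : H → H) := by
          ext x; simp [hT, Finset.sum_cons, Finset.sum_insert hj]
        rw [this]
        exact (aux_rank_one_compact (b j) (S (b j))).add ih
  -- values on basis vectors
  have hTb : ∀ (F : Finset ι) (j : ι), (S - T F) (b j) = if j ∈ F then 0 else S (b j) := by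
    intro F j
    have : T F (b j) = ∑ i ∈ F, (⟪b i, b j⟫ : ℂ) • S (b i) := by
      simp [hT, ContinuousLinearMap.sum_apply, ContinuousLinearMap.toSpanSingleton_apply]
    rw [ContinuousLinearMap.sub_apply, this]
    have horth : ∀ i, (⟪b i, b j⟫ : ℂ) = if i = j then 1 else 0 := fun i =>
      orthonormal_iff_ite.mp b.orthonormal i j
    simp_rw [horth, ite_smul, one_smul, zero_smul, Finset.sum_ite_eq' F j (fun i => S (b i))]
    by_cases hjF : j ∈ F <;> simp [hjF]
  -- tendsto
  have htend : Filter.Tendsto T Filter.atTop (nhds S) := by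
    rw [NormedAddCommGroup.tendsto_atTop]
    intro ε hε
    obtain ⟨F₀, hF₀⟩ := h.vanishing (Iio_mem_nhds (by positivity : (0:ℝ) < (ε/2)^2))
    refine ⟨F₀, fun F hF => ?_⟩
    have hnorm : ‖S - T F‖ ≤ ε / 2 := by
      refine aux_norm_le_of_hs b _ (by positivity) fun G => ?_
      have heq : ∑ j ∈ G, ‖(S - T F) (b j)‖ ^ 2
          = ∑ j ∈ G.filter (fun j => j ∉ F), ‖S (b j)‖ ^ 2 := by
        rw [Finset.sum_filter]
        refine Finset.sum_congr rfl fun j _ => ?_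
        rw [hTb]
        split <;> simp
      have hdisj : Disjoint (G.filter (fun j => j ∉ F)) F₀ := by
        rw [Finset.disjoint_left]
        intro j hjmem hj0
        exact (Finset.mem_filter.mp hjmem).2 (hF hj0)
      have := le_of_lt (Set.mem_Iio.mp (hF₀ _ hdisj))
      rw [heq]
      exact this
    have : ‖T F - S‖ ≤ ε / 2 := by rwa [norm_sub_rev] at hnorm
    calc ‖T F - S‖ ≤ ε / 2 := this
      _ < ε := by linarith
  exact isCompactOperator_of_tendsto htend (Filter.Eventually.of_forall hTc)

lemma aux_pos_cs {T : H →L[ℂ] H} (hT : T.IsPositive) (x : H) :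
    ‖T x‖ ^ 2 ≤ ‖T‖ * (⟪x, T x⟫ : ℂ).re := by
  rcases eq_or_lt_of_le (norm_nonneg T) with hT0 | hT0
  · have : T = 0 := by rwa [eq_comm, norm_eq_zero] at hT0
    simp [this]
  set t : ℝ := ‖T‖⁻¹ with ht
  have hself := hT.isSelfAdjoint
  have hadj : ∀ u v : H, (⟪u, T v⟫ : ℂ) = ⟪T u, v⟫ := fun u v => by
    conv_lhs => rw [← hself.adjoint_eq]
    rw [ContinuousLinearMap.adjoint_inner_right]
  have hkey : (0:ℝ) ≤ (⟪x - (t : ℂ) • T x, T (x - (t : ℂ) • T x)⟫ : ℂ).re :=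
    hT.re_inner_nonneg_right (x - (t : ℂ) • T x)
  have hC : (⟪x - (t : ℂ) • T x, T (x - (t : ℂ) • T x)⟫ : ℂ)
      = ⟪x, T x⟫ - (t:ℂ) * ⟪T x, T x⟫ - (t:ℂ) * ⟪T x, T x⟫
        + (t:ℂ)^2 * ⟪T x, T (T x)⟫ := by
    rw [map_sub, map_smul, inner_sub_left, inner_sub_right, inner_sub_right,
      inner_smul_left, inner_smul_right, inner_smul_left, inner_smul_right,
      hadj x (T x), Complex.conj_ofReal]
    ring
  have hre : (⟪T x, T x⟫ : ℂ).re = ‖T x‖ ^ 2 := by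
    rw [← inner_self_eq_norm_sq (𝕜 := ℂ)]; rfl
  have hcle : (⟪T x, T (T x)⟫ : ℂ).re ≤ ‖T‖ * ‖T x‖ ^ 2 := by
    calc (⟪T x, T (T x)⟫ : ℂ).re ≤ ‖(⟪T x, T (T x)⟫ : ℂ)‖ := Complex.re_le_norm _
      _ ≤ ‖T x‖ * ‖T (T x)‖ := norm_inner_le_norm _ _
      _ ≤ ‖T x‖ * (‖T‖ * ‖T x‖) := by
          exact mul_le_mul_of_nonneg_left (T.le_opNorm _) (norm_nonneg _)
      _ = ‖T‖ * ‖T x‖ ^ 2 := by ring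
  rw [hC] at hkey
  have hkey' : (0:ℝ) ≤ (⟪x, T x⟫ : ℂ).re - 2 * t * ‖T x‖ ^ 2
      + t ^ 2 * (⟪T x, T (T x)⟫ : ℂ).re := by
    have : ((⟪x, T x⟫ - (t:ℂ) * ⟪T x, T x⟫ - (t:ℂ) * ⟪T x, T x⟫
        + (t:ℂ)^2 * ⟪T x, T (T x)⟫ : ℂ)).re
        = (⟪x, T x⟫ : ℂ).re - 2 * t * ‖T x‖ ^ 2
          + t ^ 2 * (⟪T x, T (T x)⟫ : ℂ).re := by
      push_cast
      simp only [Complex.sub_re, Complex.add_re, ← Complex.ofReal_pow,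
        Complex.re_ofReal_mul, hre]
      ring
    rwa [this] at hkey
  have htpos : 0 < t := by positivity
  have h5 : t ^ 2 * (⟪T x, T (T x)⟫ : ℂ).re ≤ t ^ 2 * (‖T‖ * ‖T x‖ ^ 2) :=
    mul_le_mul_of_nonneg_left hcle (sq_nonneg t)
  have h6 : t ^ 2 * (‖T‖ * ‖T x‖ ^ 2) = t * ‖T x‖ ^ 2 := by
    rw [ht]; field_simp
  have h7 : t * ‖T x‖ ^ 2 ≤ (⟪x, T x⟫ : ℂ).re := by
    rw [h6] at h5; linarith
  calc ‖T x‖ ^ 2 = (t * ‖T x‖ ^ 2) * ‖T‖ := by rw [ht]; field_simp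
    _ ≤ (⟪x, T x⟫ : ℂ).re * ‖T‖ := mul_le_mul_of_nonneg_right h7 (norm_nonneg T)
    _ = ‖T‖ * (⟪x, T x⟫ : ℂ).re := mul_comm _ _

lemma aux_pos_diag_compact (b : HilbertBasis ι ℂ H) (T : H →L[ℂ] H) (hT : T.IsPositive)
    (hsum : Summable fun i => (⟪b i, T (b i)⟫ : ℂ).re) : IsCompactOperator (T : H → H) := by
  apply aux_hs_compact b
  refine Summable.of_nonneg_of_le (fun i => by positivity)
    (fun i => aux_pos_cs hT (b i)) (hsum.mul_left ‖T‖)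

lemma aux_isPositive_pow {A : H →L[ℂ] H} (hA : A.IsPositive) : ∀ n : ℕ, (A ^ n).IsPositive
  | 0 => by simpa [pow_zero] using (isPositive_one (E := H) (𝕜 := ℂ))
  | 1 => by simpa [pow_one] using hA
  | (n + 2) => by
      have h := (aux_isPositive_pow hA n).conj_adjoint A
      rw [hA.isSelfAdjoint.adjoint_eq] at h
      convert h using 1
      have : A ∘L (A ^ n) ∘L A = A * (A ^ n * A) := rfl
      rw [this, ← pow_succ, ← pow_succ']

lemma aux_isPositive_one_sub (f : H →L[ℂ] H) (hf : ‖f‖ ≤ 1) :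
    ((1 : H →L[ℂ] H) - adjoint f * f).IsPositive := by
  constructor
  · refine ContinuousLinearMap.isSelfAdjoint_iff_isSymmetric.mp ?_
    rw [IsSelfAdjoint]
    simp [star_sub, star_mul, ContinuousLinearMap.star_eq_adjoint,
      ContinuousLinearMap.adjoint_adjoint]
  · intro x
    have hx : ((((1 : H →L[ℂ] H) - adjoint f * f) x) : H) = x - adjoint f (f x) := rfl
    rw [ContinuousLinearMap.reApplyInnerSelf]
    rw [hx, inner_sub_left]
    have h1 : (⟪adjoint f (f x), x⟫ : ℂ) = ⟪f x, f x⟫ := by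
      rw [ContinuousLinearMap.adjoint_inner_left]
    rw [h1, map_sub]
    have h2 : ((⟪x, x⟫ : ℂ)).re = ‖x‖ ^ 2 := by
      rw [← inner_self_eq_norm_sq (𝕜 := ℂ)]; rfl
    have h3 : ((⟪f x, f x⟫ : ℂ)).re = ‖f x‖ ^ 2 := by
      rw [← inner_self_eq_norm_sq (𝕜 := ℂ)]; rfl
    have h4 : ‖f x‖ ≤ ‖x‖ := by
      calc ‖f x‖ ≤ ‖f‖ * ‖x‖ := f.le_opNorm x
        _ ≤ 1 * ‖x‖ := mul_le_mul_of_nonneg_right hf (norm_nonneg x)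
        _ = ‖x‖ := one_mul _
    show (0:ℝ) ≤ _
    rw [show RCLike.re ((⟪x,x⟫ : ℂ)) - RCLike.re ((⟪f x, f x⟫ : ℂ))
        = ((⟪x,x⟫ : ℂ)).re - ((⟪f x, f x⟫ : ℂ)).re from rfl, h2, h3]
    nlinarith [norm_nonneg (f x), norm_nonneg x]

theorem aux_main {H : Type*} [NormedAddCommGroup H] [InnerProductSpace ℂ H] [CompleteSpace H]
    {ι : Type*} [Countable ι] (b : HilbertBasis ι ℂ H)
    (f : H →L[ℂ] H) (hf : ‖f‖ ≤ 1) (n : ℕ) (hn : 1 ≤ n)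
    (h1 : Summable fun i =>
      (inner ℂ (b i) ((((1 : H →L[ℂ] H) - adjoint f * f) ^ n) (b i)) : ℂ).re)
    (h2 : Summable fun i =>
      (inner ℂ (b i) ((((1 : H →L[ℂ] H) - f * adjoint f) ^ n) (b i)) : ℂ).re) :
    ∃ g : H →L[ℂ] H, IsCompactOperator (g * f - 1 : H →L[ℂ] H) ∧
      IsCompactOperator (f * g - 1 : H →L[ℂ] H) := by
  set A : H →L[ℂ] H := 1 - adjoint f * f with hAdef
  set B : H →L[ℂ] H := 1 - f * adjoint f with hBdef
  have hA : A.IsPositive := aux_isPositive_one_sub f hf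
  have hB : B.IsPositive := by
    have hf' : ‖adjoint f‖ ≤ 1 := by
      rw [(ContinuousLinearMap.adjoint (𝕜 := ℂ) (E := H) (F := H)).norm_map f]; exact hf
    have := aux_isPositive_one_sub (adjoint f) hf'
    rwa [ContinuousLinearMap.adjoint_adjoint] at this
  have hAnc : IsCompactOperator ((A ^ n : H →L[ℂ] H) : H → H) :=
    aux_pos_diag_compact b _ (aux_isPositive_pow hA n) h1
  have hBnc : IsCompactOperator ((B ^ n : H →L[ℂ] H) : H → H) :=
    aux_pos_diag_compact b _ (aux_isPositive_pow hB n) h2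
  refine ⟨(∑ k ∈ Finset.range n, A ^ k) * adjoint f, ?_, ?_⟩
  · have e0 : adjoint f * f = 1 - A := by rw [hAdef]; noncomm_ring
    have e1 : (∑ k ∈ Finset.range n, A ^ k) * (1 - A) = 1 - A ^ n := by
      have h := geom_sum_mul A n
      have h' : (∑ k ∈ Finset.range n, A ^ k) * (1 - A)
          = -((∑ k ∈ Finset.range n, A ^ k) * (A - 1)) := by noncomm_ring
      rw [h', h]; noncomm_ring
    have e2 : ((∑ k ∈ Finset.range n, A ^ k) * adjoint f) * f - 1 = -(A ^ n) := by
      rw [mul_assoc, e0, e1]; noncomm_ring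
    rw [e2]
    simpa using hAnc.neg
  · have hcomm : f * A = B * f := by rw [hAdef, hBdef]; noncomm_ring
    have hpow : ∀ k : ℕ, f * A ^ k = B ^ k * f := by
      intro k
      induction k with
      | zero => simp
      | succ k ih =>
          rw [pow_succ', ← mul_assoc, hcomm, mul_assoc, ih, ← mul_assoc, ← pow_succ']
    have hsum : f * (∑ k ∈ Finset.range n, A ^ k)
        = (∑ k ∈ Finset.range n, B ^ k) * f := by
      rw [Finset.mul_sum, Finset.sum_mul]
      exact Finset.sum_congr rfl fun k _ => hpow k
    have e0 : f * adjoint f = 1 - B := by rw [hBdef]; noncomm_ring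
    have e1 : (∑ k ∈ Finset.range n, B ^ k) * (1 - B) = 1 - B ^ n := by
      have h := geom_sum_mul B n
      have h' : (∑ k ∈ Finset.range n, B ^ k) * (1 - B)
          = -((∑ k ∈ Finset.range n, B ^ k) * (B - 1)) := by noncomm_ring
      rw [h', h]; noncomm_ring
    have e2 : f * ((∑ k ∈ Finset.range n, A ^ k) * adjoint f) - 1 = -(B ^ n) := by
      rw [← mul_assoc, hsum, mul_assoc, e0, e1]; noncomm_ring
    rw [e2]
    simpa using hBnc.neg

end Aux

theorem stmt_15 {H : Type*} [NormedAddCommGroup H] [InnerProductSpace ℂ H] [CompleteSpace H]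
    {ι : Type*} [Countable ι] (b : HilbertBasis ι ℂ H)
    (f : H →L[ℂ] H) (hf : ‖f‖ ≤ 1) (n : ℕ) (hn : 1 ≤ n)
    (h1 : Summable fun i =>
      (inner ℂ (b i) ((((1 : H →L[ℂ] H) - adjoint f * f) ^ n) (b i)) : ℂ).re)
    (h2 : Summable fun i =>
      (inner ℂ (b i) ((((1 : H →L[ℂ] H) - f * adjoint f) ^ n) (b i)) : ℂ).re) :
    _root_.IsFredholm f := by
  exact aux_main b f hf n hn h1 h2
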